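/- Let Gamma(α, β; x) = β^α/Γ(α) · x^(α−1) e^(−βx) denote the Gamma(α, β) density at x > 0. Fix α > 1, b > 0, c > 0, and set x* = (2α/c)·log(1 + c/(2b)). Then for all x with 0 < x < x* and all β ∈ (0, c), Gamma(α, b + β/2; x) > Gamma(α, b; x); and for all x > x* and all β ∈ (0, c), Gamma(α, b + β/2; x) > Gamma(α, b + c/2; x). -/

import Mathlib

noncomputable def gammaPdf (α β x : ℝ) : ℝ :=
  β ^ α / Real.Gamma α * x ^ (α - 1) * Real.exp (-β * x)

lemma log_key {u v : ℝ} (hu : 0 < u) (huv : u < v) :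
    u * Real.log (1 + v) < v * Real.log (1 + u) := by
  have hv : 0 < v := hu.trans huv
  have hx1 : (1:ℝ) ∈ Set.Ioi (0:ℝ) := by norm_num
  have hy1 : (1 + v) ∈ Set.Ioi (0:ℝ) := by simp only [Set.mem_Ioi]; linarith
  have hne : (1:ℝ) ≠ 1 + v := by intro h; nlinarith
  have ha : (0:ℝ) < 1 - u / v := by rw [sub_pos, div_lt_one hv]; exact huv
  have hb' : (0:ℝ) < u / v := div_pos hu hv
  have hab : (1 - u / v) + u / v = 1 := by ring
  have h := strictConcaveOn_log_Ioi.2 hx1 hy1 hne ha hb' hab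
  have h1 : (1 - u / v) • (1:ℝ) + (u / v) • (1 + v) = 1 + u := by
    simp only [smul_eq_mul]; rw [mul_add, div_mul_cancel₀ u hv.ne']; ring
  rw [h1] at h
  have h2 : (1 - u / v) • Real.log 1 + (u / v) • Real.log (1 + v)
      = (u / v) * Real.log (1 + v) := by simp [Real.log_one]
  rw [h2] at h
  have h3 := mul_lt_mul_of_pos_left h hv
  have e : v * (u / v * Real.log (1 + v)) = u * Real.log (1 + v) := by field_simp
  linarith [h3, e.symm.le]

lemma gammaPdf_lt (α x : ℝ) (hα : 0 < α) (hx : 0 < x) {β₁ β₂ : ℝ} (h1 : 0 < β₁) (h2 : 0 < β₂)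
    (h : α * Real.log β₂ - β₂ * x < α * Real.log β₁ - β₁ * x) :
    gammaPdf α β₂ x < gammaPdf α β₁ x := by
  have hΓ : 0 < Real.Gamma α := Real.Gamma_pos_of_pos hα
  have hxp : 0 < x ^ (α - 1) := Real.rpow_pos_of_pos hx _
  have hrw : ∀ β : ℝ, 0 < β → gammaPdf α β x =
      Real.exp (α * Real.log β - β * x) * (x ^ (α - 1) / Real.Gamma α) := by
    intro β hβ
    have he : Real.exp (α * Real.log β - β * x) = β ^ α * Real.exp (-β * x) := by
      rw [show α * Real.log β - β * x = α * Real.log β + (-β * x) by ring,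
        Real.exp_add, Real.rpow_def_of_pos hβ, mul_comm (Real.log β) α]
    rw [he]; unfold gammaPdf; ring
  rw [hrw _ h2, hrw _ h1]
  exact mul_lt_mul_of_pos_right (Real.exp_lt_exp.2 h) (div_pos hxp hΓ)

theorem lemma_4_1 (α b c : ℝ) (hα : 1 < α) (hb : 0 < b) (hc : 0 < c) :
    (∀ x : ℝ, 0 < x → x < (2 * α / c) * Real.log (1 + c / (2 * b)) →
      ∀ β : ℝ, 0 < β → β < c → gammaPdf α (b + β / 2) x > gammaPdf α b x) ∧
    (∀ x : ℝ, x > (2 * α / c) * Real.log (1 + c / (2 * b)) →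
      ∀ β : ℝ, 0 < β → β < c → gammaPdf α (b + β / 2) x > gammaPdf α (b + c / 2) x) := by
  have hα0 : (0:ℝ) < α := by linarith
  set Lc := Real.log (1 + c / (2 * b)) with hLc
  have hLcpos : 0 < Lc := Real.log_pos (by have := div_pos hc (by linarith : (0:ℝ) < 2*b); linarith)
  -- log decomposition
  have hlog : ∀ β : ℝ, 0 < β → Real.log (b + β / 2) = Real.log b + Real.log (1 + β / (2 * b)) := by
    intro β hβ
    have h1 : b + β / 2 = b * (1 + β / (2 * b)) := by field_simp
    rw [h1, Real.log_mul (ne_of_gt hb) (by positivity)]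
  -- key : for 0 < β < c, β * Lc < c * Lβ
  have hkey : ∀ β : ℝ, 0 < β → β < c →
      β * Lc < c * Real.log (1 + β / (2 * b)) := by
    intro β hβ hβc
    have h2b : (0:ℝ) < 2 * b := by linarith
    have h := log_key (u := β / (2 * b)) (v := c / (2 * b)) (by positivity)
      (by gcongr)
    rw [div_mul_eq_mul_div, div_mul_eq_mul_div, div_lt_div_iff₀ h2b h2b] at h
    rw [hLc]
    nlinarith [h]
  constructor
  · intro x hx hx' β hβ hβc
    have hcx : x * c < 2 * α * Lc := by
      rw [div_mul_eq_mul_div, lt_div_iff₀ hc] at hx'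
      nlinarith [hx']
    show gammaPdf α b x < gammaPdf α (b + β/2) x
    apply gammaPdf_lt α x hα0 hx (by linarith) hb
    rw [hlog β hβ]
    set Lβ := Real.log (1 + β / (2 * b))
    have hk := hkey β hβ hβc
    -- need: α log b - b x < α (log b + Lβ) - (b + β/2) x, i.e. (β/2) x < α Lβ
    have : β * x < 2 * α * Lβ := by nlinarith [mul_lt_mul_of_pos_left hcx hβ, mul_lt_mul_of_pos_left hk (by positivity : (0:ℝ) < 2*α)]
    nlinarith [this]
  · intro x hx β hβ hβc
    have hxpos : 0 < x := lt_trans (by positivity) hx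
    have hcx : 2 * α * Lc < x * c := by
      rw [div_mul_eq_mul_div, gt_iff_lt, div_lt_iff₀ hc] at hx
      nlinarith [hx]
    show gammaPdf α (b + c/2) x < gammaPdf α (b + β/2) x
    apply gammaPdf_lt α x hα0 hxpos (by linarith) (by linarith)
    rw [hlog β hβ, hlog c hc, ← hLc]
    set Lβ := Real.log (1 + β / (2 * b))
    have hk := hkey β hβ hβc
    -- need: α(log b + Lc) - (b+c/2)x < α(log b + Lβ) - (b+β/2)x
    -- i.e. 2αc(Lc - Lβ) < c(c-β)x
    have h1 : (c - β) * (2 * α * Lc) < (c - β) * (x * c) :=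
      mul_lt_mul_of_pos_left hcx (by linarith)
    have h2 : 2 * α * (β * Lc) < 2 * α * (c * Lβ) :=
      mul_lt_mul_of_pos_left hk (by positivity)
    have h3 : c * (2 * α * (Lc - Lβ)) < c * ((c - β) * x) := by nlinarith
    have h4 : 2 * α * (Lc - Lβ) < (c - β) * x := by nlinarith [mul_lt_mul_of_pos_left h3 hc]
    nlinarith [h4]
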